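/- Let σ : ℝ → ℝ be continuous, 1-periodic, and satisfy σ(y) ≥ θ for some θ > 0 and all y, and let β > 0. Consider measurable functions v : [0,1] → (0, ∞) satisfying the constraint ∫₀¹ (σ(y) v(y))⁻¹ dy = 1/β, with cost J(v) = (β/2) ∫₀¹ v(y)/σ(y) dy. Then the infimum of J(v) over all such v equals (β²/2) ( ∫₀¹ σ(y)⁻¹ dy )², and it is attained by the constant control v(y) ≡ β ∫₀¹ σ(u)⁻¹ du. -/

import Mathlib

open MeasureTheory Real

/-- **Explicit Regime 3 local rate function in dimension one with zero drift.**
Let `σ : ℝ → ℝ` be continuous, 1-periodic with `σ ≥ θ > 0` and let `β > 0`.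
Over measurable `v : [0,1] → (0,∞)` satisfying `∫₀¹ (σ v)⁻¹ = 1/β` with cost
`J(v) = (β/2)∫₀¹ v/σ`, the infimum of `J` equals `(β²/2)(∫₀¹ σ⁻¹)²` and is
attained by the constant control `v ≡ β ∫₀¹ σ⁻¹`. -/
theorem regime3_local_rate_function_explicit
    (σ : ℝ → ℝ) (hσcont : Continuous σ) (hσper : Function.Periodic σ 1)
    (θ : ℝ) (hθ : 0 < θ) (hσθ : ∀ y, θ ≤ σ y)
    (β : ℝ) (hβ : 0 < β) :
    -- the value is the attained infimum of the cost over the admissible class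
    IsLeast
      {J : ℝ | ∃ v : ℝ → ℝ, Measurable v ∧ (∀ y ∈ Set.Icc (0 : ℝ) 1, 0 < v y) ∧
        IntervalIntegrable (fun y => v y / σ y) volume 0 1 ∧
        (∫ y in (0 : ℝ)..1, (σ y * v y)⁻¹) = 1 / β ∧
        J = (β / 2) * ∫ y in (0 : ℝ)..1, v y / σ y}
      ((β ^ 2 / 2) * (∫ y in (0 : ℝ)..1, (σ y)⁻¹) ^ 2) ∧
    -- the constant control `v̄ ≡ β ∫₀¹ σ⁻¹` satisfies the constraint …
    (∫ y in (0 : ℝ)..1, (σ y * (β * ∫ u in (0 : ℝ)..1, (σ u)⁻¹))⁻¹) = 1 / β ∧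
    -- … and achieves the value
    (β / 2) * (∫ y in (0 : ℝ)..1, (β * ∫ u in (0 : ℝ)..1, (σ u)⁻¹) / σ y) =
      (β ^ 2 / 2) * (∫ y in (0 : ℝ)..1, (σ y)⁻¹) ^ 2 := by
  have hσpos : ∀ y, 0 < σ y := fun y => lt_of_lt_of_le hθ (hσθ y)
  have hinv_cont : Continuous fun y => (σ y)⁻¹ :=
    hσcont.inv₀ fun y => (hσpos y).ne'
  have hinv_int : IntervalIntegrable (fun y => (σ y)⁻¹) volume 0 1 :=
    hinv_cont.intervalIntegrable 0 1
  set I : ℝ := ∫ y in (0 : ℝ)..1, (σ y)⁻¹ with hIdef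
  have hI : 0 < I :=
    intervalIntegral.intervalIntegral_pos_of_pos hinv_int
      (fun y => inv_pos.mpr (hσpos y)) one_pos
  set c : ℝ := β * I with hcdef
  have hc : 0 < c := mul_pos hβ hI
  -- the constant control satisfies the constraint
  have hconstraint : (∫ y in (0 : ℝ)..1, (σ y * c)⁻¹) = 1 / β := by
    have : (fun y => (σ y * c)⁻¹) = fun y => c⁻¹ * (σ y)⁻¹ := by
      funext y; rw [mul_inv]; ring
    rw [this, intervalIntegral.integral_const_mul, hcdef, mul_inv, mul_assoc,
      inv_mul_cancel₀ hI.ne', mul_one, one_div]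
  -- the constant control achieves the value
  have hvalue : (β / 2) * (∫ y in (0 : ℝ)..1, c / σ y) =
      (β ^ 2 / 2) * I ^ 2 := by
    have : (fun y => c / σ y) = fun y => c * (σ y)⁻¹ := by
      funext y; rw [div_eq_mul_inv]
    rw [this, intervalIntegral.integral_const_mul, hcdef]; ring
  refine ⟨⟨⟨fun _ => c, measurable_const, fun y _ => hc, ?_, hconstraint, by
      rw [hvalue]⟩, ?_⟩, hconstraint, hvalue⟩
  · exact (Continuous.div continuous_const hσcont fun y => (hσpos y).ne').intervalIntegrable 0 1
  -- lower bound via Cauchy–Schwarz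
  rintro J ⟨v, hvmeas, hvpos, hvint, hvcon, rfl⟩
  set μ : Measure ℝ := volume.restrict (Set.Ioc (0 : ℝ) 1) with hμdef
  have hIoc_pos : ∀ y ∈ Set.Ioc (0 : ℝ) 1, 0 < v y := fun y hy =>
    hvpos y ⟨hy.1.le, hy.2⟩
  -- integrability of (σ v)⁻¹
  have hgint : IntervalIntegrable (fun y => (σ y * v y)⁻¹) volume 0 1 := by
    by_contra h
    rw [intervalIntegral.integral_undef h] at hvcon
    exact (one_div_pos.mpr hβ).ne' hvcon.symm
  have h01 : (0 : ℝ) ≤ 1 := zero_le_one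
  have hgIoc : IntegrableOn (fun y => (σ y * v y)⁻¹) (Set.Ioc 0 1) volume :=
    (intervalIntegrable_iff_integrableOn_Ioc_of_le h01).mp hgint
  have hfIoc : IntegrableOn (fun y => v y / σ y) (Set.Ioc 0 1) volume :=
    (intervalIntegrable_iff_integrableOn_Ioc_of_le h01).mp hvint
  set S : ℝ := ∫ y in (0 : ℝ)..1, v y / σ y with hSdef
  have hSnn : 0 ≤ S := by
    apply intervalIntegral.integral_nonneg h01
    intro y hy
    exact div_nonneg (hvpos y hy).le (hσpos y).le
  -- ENNReal functions
  set F : ℝ → ENNReal := fun y => ENNReal.ofReal (Real.sqrt (v y / σ y)) with hF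
  set G : ℝ → ENNReal := fun y => ENNReal.ofReal (Real.sqrt ((σ y * v y)⁻¹)) with hG
  have hFmeas : AEMeasurable F μ :=
    (ENNReal.measurable_ofReal.comp (Real.continuous_sqrt.measurable.comp
      (hvmeas.div hσcont.measurable))).aemeasurable
  have hGmeas : AEMeasurable G μ :=
    (ENNReal.measurable_ofReal.comp (Real.continuous_sqrt.measurable.comp
      ((hσcont.measurable.mul hvmeas).inv))).aemeasurable
  have hpq : (2 : ℝ).HolderConjugate 2 := Real.holderConjugate_iff.mpr ⟨one_lt_two, by norm_num⟩
  have hholder := ENNReal.lintegral_mul_le_Lp_mul_Lq μ hpq hFmeas hGmeas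
  -- F * G = ofReal σ⁻¹ a.e. on μ
  have hmul : ∀ᵐ y ∂μ, (F * G) y = ENNReal.ofReal ((σ y)⁻¹) := by
    rw [hμdef, ae_restrict_iff' measurableSet_Ioc]
    filter_upwards with y hy
    have hvy := hIoc_pos y hy
    have hσy := hσpos y
    simp only [Pi.mul_apply, hF, hG]
    rw [← ENNReal.ofReal_mul (Real.sqrt_nonneg _), ← Real.sqrt_mul
      (div_nonneg hvy.le hσy.le)]
    congr 2
    rw [show v y / σ y * (σ y * v y)⁻¹ = ((σ y)⁻¹) ^ 2 by
      field_simp]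
    exact Real.sqrt_sq (inv_nonneg.mpr hσy.le)
  -- F^2 = ofReal (v/σ) a.e., G^2 = ofReal ((σv)⁻¹) a.e.
  have hF2 : ∀ᵐ y ∂μ, F y ^ (2 : ℝ) = ENNReal.ofReal (v y / σ y) := by
    rw [hμdef, ae_restrict_iff' measurableSet_Ioc]
    filter_upwards with y hy
    have h0 : (0 : ℝ) ≤ v y / σ y := div_nonneg (hIoc_pos y hy).le (hσpos y).le
    rw [hF, ENNReal.ofReal_rpow_of_nonneg (Real.sqrt_nonneg _) (by norm_num)]
    congr 1
    rw [show (2:ℝ) = ((2:ℕ):ℝ) by norm_num, Real.rpow_natCast, Real.sq_sqrt h0]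
  have hG2 : ∀ᵐ y ∂μ, G y ^ (2 : ℝ) = ENNReal.ofReal ((σ y * v y)⁻¹) := by
    rw [hμdef, ae_restrict_iff' measurableSet_Ioc]
    filter_upwards with y hy
    have h0 : (0 : ℝ) ≤ (σ y * v y)⁻¹ :=
      inv_nonneg.mpr (mul_nonneg (hσpos y).le (hIoc_pos y hy).le)
    rw [hG, ENNReal.ofReal_rpow_of_nonneg (Real.sqrt_nonneg _) (by norm_num)]
    congr 1
    rw [show (2:ℝ) = ((2:ℕ):ℝ) by norm_num, Real.rpow_natCast, Real.sq_sqrt h0]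
  -- convert the three lintegrals
  have hLHS : (∫⁻ y, (F * G) y ∂μ) = ENNReal.ofReal I := by
    rw [lintegral_congr_ae hmul]
    rw [hIdef, intervalIntegral.integral_of_le h01,
      ← MeasureTheory.ofReal_integral_eq_lintegral_ofReal
        (hinv_cont.integrableOn_Ioc)
        (Filter.Eventually.of_forall fun y => inv_nonneg.mpr (hσpos y).le)]
  have hA : (∫⁻ y, F y ^ (2 : ℝ) ∂μ) = ENNReal.ofReal S := by
    rw [lintegral_congr_ae hF2, hSdef, intervalIntegral.integral_of_le h01,
      ← MeasureTheory.ofReal_integral_eq_lintegral_ofReal hfIoc ?_]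
    filter_upwards [ae_restrict_mem measurableSet_Ioc] with y hy
    exact div_nonneg (hIoc_pos y hy).le (hσpos y).le
  have hB : (∫⁻ y, G y ^ (2 : ℝ) ∂μ) = ENNReal.ofReal (1 / β) := by
    rw [lintegral_congr_ae hG2, ← hvcon, intervalIntegral.integral_of_le h01,
      ← MeasureTheory.ofReal_integral_eq_lintegral_ofReal hgIoc ?_]
    filter_upwards [ae_restrict_mem measurableSet_Ioc] with y hy
    exact inv_nonneg.mpr (mul_nonneg (hσpos y).le (hIoc_pos y hy).le)
  rw [hLHS, hA, hB] at hholder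
  -- turn into a real inequality
  have hRHS : (ENNReal.ofReal S) ^ ((1:ℝ) / 2) * (ENNReal.ofReal (1 / β)) ^ ((1:ℝ) / 2)
      = ENNReal.ofReal (Real.sqrt S * Real.sqrt (1 / β)) := by
    rw [ENNReal.ofReal_rpow_of_nonneg hSnn (by norm_num),
      ENNReal.ofReal_rpow_of_nonneg (by positivity) (by norm_num),
      ← ENNReal.ofReal_mul (by positivity), ← Real.sqrt_eq_rpow, ← Real.sqrt_eq_rpow]
  rw [hRHS] at hholder
  have hreal : I ≤ Real.sqrt S * Real.sqrt (1 / β) :=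
    (ENNReal.ofReal_le_ofReal_iff (by positivity)).mp hholder
  have hsq : I ^ 2 ≤ S * (1 / β) := by
    calc I ^ 2 ≤ (Real.sqrt S * Real.sqrt (1 / β)) ^ 2 := by
          apply pow_le_pow_left₀ hI.le hreal 2
      _ = S * (1 / β) := by
          rw [mul_pow, Real.sq_sqrt hSnn, Real.sq_sqrt (by positivity)]
  -- conclude
  have hfinal : β * I ^ 2 ≤ S := by
    have h2 : β * (S * (1 / β)) = S := by field_simp
    have h3 := mul_le_mul_of_nonneg_left hsq hβ.le
    rwa [h2] at h3
  calc (β ^ 2 / 2) * I ^ 2 = (β / 2) * (β * I ^ 2) := by ring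
    _ ≤ (β / 2) * S := by
        apply mul_le_mul_of_nonneg_left hfinal (by positivity)
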